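/- Let n and k be integers with 1 ≤ k < n. For any two vertices U and W of the Johnson graph J(n,k), the graph distance between U and W equals k − |U ∩ W| (equivalently, |U \ W|). -/

import Mathlib

/-- The Johnson graph `J(n,k)`: vertices are the `k`-element subsets of `{1,...,n}`,
two vertices adjacent iff their intersection has `k-1` elements. -/
def johnsonGraph (n k : ℕ) : SimpleGraph {s : Finset (Fin n) // s.card = k} where
  Adj U W := U ≠ W ∧ (U.1 ∩ W.1).card = k - 1
  symm := by
    constructor
    intro U W h
    exact ⟨h.1.symm, by rw [Finset.inter_comm]; exact h.2⟩
  loopless := by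
    constructor
    intro U h
    exact h.1 rfl

lemma johnson_adj_sdiff_card {n k : ℕ} (hk : 1 ≤ k)
    {U V : {s : Finset (Fin n) // s.card = k}}
    (h : (johnsonGraph n k).Adj U V) : (U.1 \ V.1).card = 1 := by
  have h1 : (U.1 \ V.1).card + (U.1 ∩ V.1).card = U.1.card :=
    Finset.card_sdiff_add_card_inter _ _
  rw [h.2, U.2] at h1
  omega

lemma johnson_walk_lower {n k : ℕ} (hk : 1 ≤ k)
    {U W : {s : Finset (Fin n) // s.card = k}}
    (p : (johnsonGraph n k).Walk U W) : (U.1 \ W.1).card ≤ p.length := by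
  induction p with
  | nil => simp
  | @cons u v w h p ih =>
    have h1 := johnson_adj_sdiff_card hk h
    have h2 : u.1 \ w.1 ⊆ (u.1 \ v.1) ∪ (v.1 \ w.1) := sdiff_triangle _ _ _
    calc (u.1 \ w.1).card ≤ ((u.1 \ v.1) ∪ (v.1 \ w.1)).card := Finset.card_le_card h2
      _ ≤ (u.1 \ v.1).card + (v.1 \ w.1).card := Finset.card_union_le _ _
      _ ≤ 1 + p.length := by omega
      _ = (SimpleGraph.Walk.cons h p).length := by simp [Nat.add_comm]

lemma johnson_walk_upper {n k : ℕ} (hk : 1 ≤ k) :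
    ∀ m (U W : {s : Finset (Fin n) // s.card = k}), (U.1 \ W.1).card = m →
    ∃ p : (johnsonGraph n k).Walk U W, p.length = m := by
  intro m
  induction m with
  | zero =>
    intro U W h
    have hsub : U.1 ⊆ W.1 := by
      rw [← Finset.sdiff_eq_empty_iff_subset]
      exact Finset.card_eq_zero.mp h
    have : U = W := Subtype.ext (Finset.eq_of_subset_of_card_le hsub (by rw [U.2, W.2]))
    subst this
    exact ⟨.nil, rfl⟩
  | succ m ih =>
    intro U W h
    obtain ⟨a, ha⟩ := Finset.card_pos.mp (by omega : 0 < (U.1 \ W.1).card)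
    rw [Finset.mem_sdiff] at ha
    have hWU : 0 < (W.1 \ U.1).card := by
      have h1 : (U.1 \ W.1).card + (U.1 ∩ W.1).card = U.1.card :=
        Finset.card_sdiff_add_card_inter _ _
      have h2 : (W.1 \ U.1).card + (W.1 ∩ U.1).card = W.1.card :=
        Finset.card_sdiff_add_card_inter _ _
      rw [Finset.inter_comm] at h2
      rw [U.2] at h1; rw [W.2] at h2
      omega
    obtain ⟨b, hb⟩ := Finset.card_pos.mp hWU
    rw [Finset.mem_sdiff] at hb
    have hba : b ∉ U.1.erase a := fun hx => hb.2 (Finset.mem_of_mem_erase hx)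
    have hcard : (insert b (U.1.erase a)).card = k := by
      rw [Finset.card_insert_of_notMem hba, Finset.card_erase_of_mem ha.1, U.2]
      omega
    set V : {s : Finset (Fin n) // s.card = k} := ⟨insert b (U.1.erase a), hcard⟩ with hV
    have hinter : U.1 ∩ V.1 = U.1.erase a := by
      ext x
      simp only [hV, Finset.mem_inter, Finset.mem_insert, Finset.mem_erase]
      constructor
      · rintro ⟨hxU, hx | hx⟩
        · exact absurd (hx ▸ hxU) hb.2
        · exact hx
      · rintro ⟨hxa, hxU⟩
        exact ⟨hxU, Or.inr ⟨hxa, hxU⟩⟩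
    have hadj : (johnsonGraph n k).Adj U V := by
      refine ⟨fun he => ?_, ?_⟩
      · have : a ∈ V.1 := he ▸ ha.1
        simp only [hV, Finset.mem_insert, Finset.mem_erase] at this
        rcases this with h' | h'
        · exact hb.2 (h' ▸ ha.1)
        · exact h'.1 rfl
      · rw [hinter, Finset.card_erase_of_mem ha.1, U.2]
    have hVW : V.1 \ W.1 = (U.1 \ W.1).erase a := by
      ext x
      simp only [hV, Finset.mem_sdiff, Finset.mem_insert, Finset.mem_erase]
      constructor
      · rintro ⟨hx | hx, hxW⟩
        · exact absurd (hx ▸ hb.1) hxW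
        · exact ⟨hx.1, hx.2, hxW⟩
      · rintro ⟨hxa, hxU, hxW⟩
        exact ⟨Or.inr ⟨hxa, hxU⟩, hxW⟩
    have hVWcard : (V.1 \ W.1).card = m := by
      rw [hVW, Finset.card_erase_of_mem (Finset.mem_sdiff.mpr ha), h]
      omega
    obtain ⟨p, hp⟩ := ih V W hVWcard
    exact ⟨.cons hadj p, by simp [hp]⟩

/-- For `1 ≤ k < n`, the graph distance between two vertices `U, W` of the Johnson
graph `J(n,k)` equals `k - |U ∩ W|`, equivalently `|U \ W|`. -/
theorem johnsonGraph_dist (n k : ℕ) (hk : 1 ≤ k) (hkn : k < n)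
    (U W : {s : Finset (Fin n) // s.card = k}) :
    (johnsonGraph n k).dist U W = k - (U.1 ∩ W.1).card ∧
    (johnsonGraph n k).dist U W = (U.1 \ W.1).card := by
  obtain ⟨p, hp⟩ := johnson_walk_upper hk (U.1 \ W.1).card U W rfl
  have hreach : (johnsonGraph n k).Reachable U W := ⟨p⟩
  have hle : (johnsonGraph n k).dist U W ≤ (U.1 \ W.1).card :=
    hp ▸ SimpleGraph.dist_le p
  have hge : (U.1 \ W.1).card ≤ (johnsonGraph n k).dist U W := by
    obtain ⟨q, hq⟩ := hreach.exists_walk_length_eq_dist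
    exact hq ▸ johnson_walk_lower hk q
  have hd : (johnsonGraph n k).dist U W = (U.1 \ W.1).card := le_antisymm hle hge
  have h1 : (U.1 \ W.1).card + (U.1 ∩ W.1).card = U.1.card :=
    Finset.card_sdiff_add_card_inter _ _
  rw [U.2] at h1
  exact ⟨by omega, hd⟩
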